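/- On a pseudo-Euclidean space (ℝ^{n+2}, Q) with Q of signature (n+1,1), for a null vector p ≠ 0, the quotient ⟨p⟩^⊥ / ⟨p⟩ carries a well-defined bilinear form induced by Q, and this induced form is positive definite. -/

import Mathlib

/-- The bilinear form `Q(x,y) = x₀ y_{n+1} + x_{n+1} y₀ + x₁y₁ + ⋯ + xₙyₙ`
of signature `(n+1,1)` on `ℝ^{n+2}`. -/
def Qform (n : ℕ) (x y : Fin (n + 2) → ℝ) : ℝ :=
  x 0 * y (Fin.last (n + 1)) + x (Fin.last (n + 1)) * y 0
    + ∑ i : Fin n, x i.succ.castSucc * y i.succ.castSucc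

lemma Qform_comm (n : ℕ) (x y : Fin (n+2) → ℝ) : Qform n x y = Qform n y x := by
  unfold Qform
  rw [Finset.sum_congr rfl (fun i _ => mul_comm (x i.succ.castSucc) (y i.succ.castSucc))]
  ring

lemma Qform_add_left (n : ℕ) (x x' y : Fin (n+2) → ℝ) :
    Qform n (x + x') y = Qform n x y + Qform n x' y := by
  unfold Qform
  simp only [Pi.add_apply, add_mul, Finset.sum_add_distrib]
  ring

lemma Qform_smul_left (n : ℕ) (c : ℝ) (x y : Fin (n+2) → ℝ) :
    Qform n (c • x) y = c * Qform n x y := by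
  unfold Qform
  simp only [Pi.smul_apply, smul_eq_mul, mul_assoc, ← Finset.mul_sum]
  ring

lemma Qform_add_right (n : ℕ) (x y y' : Fin (n+2) → ℝ) :
    Qform n x (y + y') = Qform n x y + Qform n x y' := by
  rw [Qform_comm, Qform_add_left, Qform_comm n y x, Qform_comm n y' x]

lemma Qform_smul_right (n : ℕ) (c : ℝ) (x y : Fin (n+2) → ℝ) :
    Qform n x (c • y) = c * Qform n x y := by
  rw [Qform_comm, Qform_smul_left, Qform_comm n y x]

lemma Qform_shift (n : ℕ) (p z w : Fin (n+2) → ℝ) (hnull : Qform n p p = 0)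
    (hz : Qform n z p = 0) (hw : Qform n w p = 0) (c d : ℝ) :
    Qform n (z + c • p) (w + d • p) = Qform n z w := by
  rw [Qform_add_left, Qform_add_right, Qform_add_right, Qform_smul_left,
      Qform_smul_left, Qform_smul_right, Qform_smul_right, hnull,
      Qform_comm n p w, hw, hz]
  ring

lemma fin_cases3 (n : ℕ) (j : Fin (n+2)) :
    j = 0 ∨ j = Fin.last (n+1) ∨ ∃ i : Fin n, j = i.succ.castSucc := by
  rcases Nat.lt_or_ge j.val (n+1) with h | h
  · rcases Nat.eq_zero_or_pos j.val with h0 | h0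
    · left; exact Fin.ext h0
    · right; right
      refine ⟨⟨j.val - 1, by omega⟩, ?_⟩
      apply Fin.ext
      simp [Fin.coe_castSucc, Fin.val_succ]
      omega
  · right; left; apply Fin.ext
    have := j.isLt
    simp [Fin.last]
    omega

lemma Qform_of_fst_zero (n : ℕ) (z : Fin (n+2) → ℝ) (h0 : z 0 = 0) :
    Qform n z z = ∑ i : Fin n, (z i.succ.castSucc)^2 := by
  unfold Qform
  rw [h0]
  simp [sq]

lemma sum_sq_nonneg (n : ℕ) (z : Fin (n+2) → ℝ) :
    0 ≤ ∑ i : Fin n, (z i.succ.castSucc)^2 :=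
  Finset.sum_nonneg fun i _ => sq_nonneg _

lemma sum_sq_eq_zero (n : ℕ) (z : Fin (n+2) → ℝ)
    (h : ∑ i : Fin n, (z i.succ.castSucc)^2 = 0) :
    ∀ i : Fin n, z i.succ.castSucc = 0 := by
  intro i
  have := (Finset.sum_eq_zero_iff_of_nonneg (fun i _ => sq_nonneg (z i.succ.castSucc))).mp h
    i (Finset.mem_univ i)
  exact pow_eq_zero_iff (by norm_num) |>.mp this

/-- For a nonzero null vector `p`, the form induced by `Q` on `⟨p⟩^⊥ / ⟨p⟩` is
well defined (independent of representatives modulo `⟨p⟩`) and positive definite. -/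
theorem induced_form_positive_definite (n : ℕ) (p : Fin (n + 2) → ℝ)
    (hp : p ≠ 0) (hnull : Qform n p p = 0) :
    (∀ z w : Fin (n + 2) → ℝ, Qform n z p = 0 → Qform n w p = 0 →
      ∀ c d : ℝ, Qform n (z + c • p) (w + d • p) = Qform n z w) ∧
    (∀ z : Fin (n + 2) → ℝ, Qform n z p = 0 →
      0 ≤ Qform n z z ∧ (Qform n z z = 0 → ∃ c : ℝ, z = c • p)) := by
  refine ⟨fun z w hz hw c d => Qform_shift n p z w hnull hz hw c d, ?_⟩
  intro z hz
  by_cases hp0 : p 0 = 0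
  · -- first coordinate of p vanishes, so all middle coordinates of p vanish
    have hpsum : ∑ i : Fin n, (p i.succ.castSucc)^2 = 0 := by
      rw [← Qform_of_fst_zero n p hp0, hnull]
    have hpm : ∀ i : Fin n, p i.succ.castSucc = 0 := sum_sq_eq_zero n p hpsum
    have hpl : p (Fin.last (n+1)) ≠ 0 := by
      intro hl
      apply hp
      funext j
      rcases fin_cases3 n j with rfl | rfl | ⟨i, rfl⟩
      · exact hp0
      · exact hl
      · exact hpm i
    have hz0 : z 0 = 0 := by
      have : z 0 * p (Fin.last (n+1)) = 0 := by
        have := hz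
        unfold Qform at this
        rw [hp0] at this
        simpa only [hpm, mul_zero, zero_mul, Finset.sum_const_zero, add_zero, zero_add] using this
      exact (mul_eq_zero.mp this).resolve_right hpl
    rw [Qform_of_fst_zero n z hz0]
    refine ⟨sum_sq_nonneg n z, fun h => ?_⟩
    have hzm := sum_sq_eq_zero n z h
    refine ⟨z (Fin.last (n+1)) / p (Fin.last (n+1)), ?_⟩
    funext j
    rcases fin_cases3 n j with rfl | rfl | ⟨i, rfl⟩
    · simp [hz0, hp0]
    · simp only [Pi.smul_apply, smul_eq_mul]; field_simp
    · simp only [Pi.smul_apply, smul_eq_mul, hzm i, hpm i, mul_zero]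
  · -- p 0 ≠ 0 : shift z so its first coordinate vanishes
    set c : ℝ := z 0 / p 0 with hc
    set w : Fin (n+2) → ℝ := z + (-c) • p with hwdef
    have hw : Qform n w p = 0 := by
      rw [hwdef, Qform_add_left, Qform_smul_left, hz, hnull]; ring
    have hww : Qform n w w = Qform n z z := Qform_shift n p z z hnull hz hz (-c) (-c)
    have hw0 : w 0 = 0 := by
      simp only [hwdef, Pi.add_apply, Pi.smul_apply, smul_eq_mul, hc]
      field_simp
      ring
    rw [← hww, Qform_of_fst_zero n w hw0]
    refine ⟨sum_sq_nonneg n w, fun h => ?_⟩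
    have hwm := sum_sq_eq_zero n w h
    have hwl : w (Fin.last (n+1)) = 0 := by
      have : w (Fin.last (n+1)) * p 0 = 0 := by
        have := hw
        unfold Qform at this
        rw [hw0] at this
        simpa only [hwm, mul_zero, zero_mul, Finset.sum_const_zero, add_zero, zero_add] using this
      exact (mul_eq_zero.mp this).resolve_right hp0
    have hwz : w = 0 := by
      funext j
      rcases fin_cases3 n j with rfl | rfl | ⟨i, rfl⟩
      · exact hw0
      · exact hwl
      · exact hwm i
    refine ⟨c, ?_⟩
    funext j
    have := congrFun hwz j
    simp only [hwdef, Pi.add_apply, Pi.smul_apply, smul_eq_mul, Pi.zero_apply] at this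
    simp only [Pi.smul_apply, smul_eq_mul]
    linarith
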